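/- Let 2 ≤ d_1 ≤ d_2 ≤ ... ≤ d_n be integers with n ≥ 2. The system requiring, for each i in {1,...,n}, that (d_i - 1)·a_i + b + 1 - d_i = 0, and that the minimum of the list {0, d_1·a_1 - d_1, d_2·a_2 + 1 - d_2, ..., d_n·a_n + 1 - d_n} be attained at least twice, has the unique rational solution a_1 = ... = a_n = 1, b = 0. -/

import Mathlib

private lemma key_div_lt (p q b : ℚ) (hp : 2 ≤ p) (hq : p ≤ q) (hb : 0 < b) :
    -(p * b) / (p - 1) < 1 - q * b / (q - 1) := by
  have h1 : -(p * b) / (p - 1) ≤ -(q * b) / (q - 1) := by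
    rw [div_le_div_iff₀ (by linarith) (by linarith)]
    nlinarith
  have h2 : -(q * b) / (q - 1) < 1 - q * b / (q - 1) := by
    have h : -(q * b) / (q - 1) = -(q * b / (q - 1)) := by ring
    rw [h]; linarith
  linarith

private lemma strict_min_unique {m : ℕ} (g : Fin m → ℚ) (t : Fin m)
    (hstrict : ∀ k, k ≠ t → g t < g k) {i j : Fin m} (hij : i ≠ j)
    (hmin : ∀ k, g i ≤ g k) (heq : g i = g j) : False := by
  have hi : i = t := by
    by_contra h
    exact absurd (hmin t) (not_le.mpr (hstrict i h))
  subst hi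
  exact absurd heq (ne_of_lt (hstrict j (Ne.symm hij)))

/-- The tropical Lagrange system for the refined hypersurface with degrees
`2 ≤ d 0 ≤ d 1 ≤ ⋯ ≤ d (n-1)`: the unique rational solution is `a = 1`, `b = 0`. -/
theorem stmt_3 (n : ℕ) (hn : 2 ≤ n) (d : Fin n → ℕ) (hd : ∀ i, 2 ≤ d i)
    (hmono : Monotone d) (a : Fin n → ℚ) (b : ℚ)
    (g : Fin (n + 1) → ℚ)
    (hg : g = Fin.cons 0 (fun l : Fin n =>
      if (l : ℕ) = 0 then (d l : ℚ) * a l - d l else (d l : ℚ) * a l + 1 - d l)) :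
    ((∀ i : Fin n, ((d i : ℚ) - 1) * a i + b + 1 - d i = 0) ∧
      (∃ i j : Fin (n + 1), i ≠ j ∧ (∀ k, g i ≤ g k) ∧ g i = g j))
    ↔ ((∀ i, a i = 1) ∧ b = 0) := by
  subst hg
  have hn0 : 0 < n := by omega
  set l0 : Fin n := ⟨0, hn0⟩ with hl0
  have hD : ∀ i : Fin n, (2:ℚ) ≤ (d i : ℚ) := fun i => by exact_mod_cast hd i
  constructor
  · rintro ⟨h1, i, j, hij, hmin, heq⟩
    have ha : ∀ i : Fin n, a i = 1 - b / ((d i : ℚ) - 1) := by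
      intro i
      have h := h1 i
      have hne : (d i : ℚ) - 1 ≠ 0 := by have := hD i; linarith
      field_simp
      linarith
    have hval1 : ∀ l : Fin n, (d l : ℚ) * a l - d l = -((d l : ℚ) * b) / ((d l : ℚ) - 1) := by
      intro l
      have hne : (d l : ℚ) - 1 ≠ 0 := by have := hD l; linarith
      rw [ha l]
      field_simp
      ring
    have hval2 : ∀ l : Fin n, (d l : ℚ) * a l + 1 - d l
        = 1 - (d l : ℚ) * b / ((d l : ℚ) - 1) := by
      intro l
      have hne : (d l : ℚ) - 1 ≠ 0 := by have := hD l; linarith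
      rw [ha l]
      field_simp
      ring
    have hb0 : b = 0 := by
      rcases lt_trichotomy b 0 with hb | hb | hb
      · exfalso
        apply strict_min_unique _ (0 : Fin (n+1)) ?_ hij hmin heq
        intro k hk
        induction k using Fin.cases with
        | zero => exact absurd rfl hk
        | succ l =>
          simp only [Fin.cons_zero, Fin.cons_succ]
          have hDl := hD l
          have hpos : (0:ℚ) < (d l : ℚ) - 1 := by linarith
          have hnum : (0:ℚ) < -((d l : ℚ) * b) := by nlinarith
          by_cases h0 : (l : ℕ) = 0
          · rw [if_pos h0, hval1 l]
            exact div_pos hnum hpos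
          · rw [if_neg h0, hval2 l]
            have := div_pos hnum hpos
            have heqd : -((d l : ℚ) * b) / ((d l : ℚ) - 1)
                = -((d l : ℚ) * b / ((d l : ℚ) - 1)) := by ring
            rw [heqd] at this
            linarith
      · exact hb
      · exfalso
        apply strict_min_unique _ (Fin.succ l0) ?_ hij hmin heq
        have hgt : (Fin.cons 0 (fun l : Fin n =>
            if (l : ℕ) = 0 then (d l : ℚ) * a l - d l else (d l : ℚ) * a l + 1 - d l) :
            Fin (n+1) → ℚ) (Fin.succ l0)
            = -((d l0 : ℚ) * b) / ((d l0 : ℚ) - 1) := by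
          rw [Fin.cons_succ, if_pos rfl, hval1 l0]
        intro k hk
        rw [hgt]
        have hD0 := hD l0
        have hpos0 : (0:ℚ) < (d l0 : ℚ) - 1 := by linarith
        induction k using Fin.cases with
        | zero =>
          simp only [Fin.cons_zero]
          apply div_neg_of_neg_of_pos _ hpos0
          nlinarith
        | succ l =>
          have hl : (l : ℕ) ≠ 0 := by
            intro h
            apply hk
            congr 1
            exact Fin.ext h
          simp only [Fin.cons_succ, if_neg hl]
          rw [hval2 l]
          have hle : (d l0 : ℚ) ≤ (d l : ℚ) := by
            exact_mod_cast hmono (show l0 ≤ l by simp [hl0, Fin.le_def])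
          exact key_div_lt _ _ _ hD0 hle hb
    refine ⟨fun i => ?_, hb0⟩
    rw [ha i, hb0]
    simp
  · rintro ⟨ha1, hb0⟩
    constructor
    · intro i
      rw [ha1 i, hb0]
      ring
    · refine ⟨0, Fin.succ l0, (Fin.succ_ne_zero l0).symm, ?_, ?_⟩
      · intro k
        induction k using Fin.cases with
        | zero => simp
        | succ l =>
          simp only [Fin.cons_zero, Fin.cons_succ, ha1 l]
          split <;> norm_num
      · simp [ha1 l0]
        rfl
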